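/- Let n ≥ 2, let a : Fin n → ℝ with a i > 0 for all i, let t₀ ∈ ℝ satisfy ∑ i, exp(a i * t₀) = 1, set e i = exp(a i * t₀) and S = ∑ k, a k * e k, and define L(λ) i = e i * (ln(λ i) − (a i / S) * ∑ j, e j * ln(λ j)). Let λ ∈ Δ° and let s ∈ ℝ satisfy ∑ i, exp(a i * s) / λ i = 1, so that λ⁻ given by λ⁻ i = exp(a i * s) / λ i is the inverse of λ in the quotient group (Δ°, ⊕_a). Then L(λ⁻) = −L(λ). -/
import Mathlib


open Real Finset

/-- The open probability simplex. -/
def simplex' (n : ℕ) : Set (Fin n → ℝ) :=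
  {l | (∀ i, 0 < l i) ∧ ∑ i, l i = 1}

/-- the quotient logarithm `L = Log_{C_a}` sends the `⊕_a`-inverse
of `λ` to `-L(λ)`. -/
theorem stmt8 (n : ℕ) (hn : 2 ≤ n) (a : Fin n → ℝ) (ha : ∀ i, 0 < a i)
    (t₀ : ℝ) (ht₀ : (∑ i, Real.exp (a i * t₀)) = 1)
    (e : Fin n → ℝ) (he : ∀ i, e i = Real.exp (a i * t₀))
    (S : ℝ) (hS : S = ∑ k, a k * e k)
    (L : (Fin n → ℝ) → Fin n → ℝ)
    (hL : ∀ l i, L l i =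
      e i * (Real.log (l i) - (a i / S) * ∑ j, e j * Real.log (l j)))
    (l : Fin n → ℝ) (hl : l ∈ simplex' n)
    (s : ℝ) (hs : (∑ i, Real.exp (a i * s) / l i) = 1)
    (linv : Fin n → ℝ) (hlinv : ∀ i, linv i = Real.exp (a i * s) / l i) :
    L linv = -L l := by
  have hlpos := hl.1
  have hne : Nonempty (Fin n) := ⟨⟨0, by omega⟩⟩
  have hSpos : 0 < S := by
    rw [hS]
    apply Finset.sum_pos
    · intro k _
      exact mul_pos (ha k) (by rw [he k]; positivity)
    · exact Finset.univ_nonempty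
  have hlog : ∀ i, Real.log (linv i) = a i * s - Real.log (l i) := by
    intro i
    rw [hlinv i, Real.log_div (Real.exp_ne_zero _) (ne_of_gt (hlpos i)), Real.log_exp]
  funext i
  have hsum : (∑ j, e j * Real.log (linv j))
      = s * S - ∑ j, e j * Real.log (l j) := by
    rw [hS, Finset.mul_sum, ← Finset.sum_sub_distrib]
    apply Finset.sum_congr rfl
    intro j _
    rw [hlog j]; ring
  simp only [hL, Pi.neg_apply, hlog i, hsum]
  field_simp
  ring
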